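/- Let (P, ≤) be a partial order with greatest element 1 and κ a cardinal. If P is not strongly <κ-distributive, then INC has a winning strategy in the completeness game G(P, κ). -/

import Mathlib

universe u v

/-- `D` is open (downward closed) and dense in the partial order `P`. -/
def OpenDense {P : Type u} [Preorder P] (D : Set P) : Prop :=
  (∀ p ∈ D, ∀ q, q ≤ p → q ∈ D) ∧ ∀ p : P, ∃ q, q ≤ p ∧ q ∈ D

/-- `P` is strongly `<κ`-distributive: for every `κ`-sequence of open dense sets and
every `p` there is a descending sequence (a thread) below `p` meeting them in order. -/
def StronglyDistrib (κ : Cardinal.{v}) (P : Type u) [Preorder P] : Prop :=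
  ∀ D : Ordinal.{v} → Set P, (∀ α < κ.ord, OpenDense (D α)) → ∀ p : P,
    ∃ f : Ordinal.{v} → P, f 0 ≤ p ∧
      (∀ β α, β ≤ α → α < κ.ord → f α ≤ f β) ∧
      ∀ α < κ.ord, f α ∈ D α

/-- `P` is `<κ`-distributive: intersections of fewer than `κ` open dense sets are dense. -/
def DistribLt (κ : Cardinal.{v}) (P : Type u) [Preorder P] : Prop :=
  ∀ γ < κ.ord, ∀ D : Ordinal.{v} → Set P, (∀ α < γ, OpenDense (D α)) →
    ∀ p : P, ∃ q, q ≤ p ∧ ∀ α < γ, q ∈ D α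

/-- An ordinal is odd if it equals `γ + (2n+1)` with `γ` zero or a limit ordinal. -/
def OrdOdd (α : Ordinal.{v}) : Prop :=
  ∃ (γ : Ordinal.{v}) (n : ℕ), (γ = 0 ∨ Order.IsSuccLimit γ) ∧ α = γ + ((2 * n + 1 : ℕ) : Ordinal.{v})

/-- An ordinal is even (this includes `0` and all limit ordinals) if it equals
`γ + 2n` with `γ` zero or a limit ordinal. -/
def OrdEven (α : Ordinal.{v}) : Prop :=
  ∃ (γ : Ordinal.{v}) (n : ℕ), (γ = 0 ∨ Order.IsSuccLimit γ) ∧ α = γ + ((2 * n : ℕ) : Ordinal.{v})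

/-- A strategy for the player INC in the completeness game: given the sequence of
previous moves (of odd length), it produces INC's next move. (Only its values on
descending sequences of odd length matter.) -/
def IncStrategy.{w, x} (P : Type w) : Type (max w (x + 1)) :=
  (α : Ordinal.{x}) → ((β : Ordinal.{x}) → β < α → P) → P

/-- A strategy for the player COM in the completeness game: given the sequence of
previous moves (of even or limit length), it produces COM's next move. -/
def ComStrategy.{w, x} (P : Type w) : Type (max w (x + 1)) :=
  (α : Ordinal.{x}) → ((β : Ordinal.{x}) → β < α → P) → P

/-- The partial play `s` of length `α` is a play of the completeness game in which
INC has followed the strategy `σ`: it starts with `1 = ⊤`, is descending, and the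
move at every odd stage is given by `σ`. -/
def IncFollows {P : Type u} [Preorder P] [OrderTop P] (σ : IncStrategy.{u, v} P)
    (α : Ordinal.{v}) (s : (β : Ordinal.{v}) → β < α → P) : Prop :=
  (∀ h0 : (0 : Ordinal.{v}) < α, s 0 h0 = ⊤) ∧
  (∀ β γ (hβγ : β ≤ γ) (hγ : γ < α), s γ hγ ≤ s β (lt_of_le_of_lt hβγ hγ)) ∧
  (∀ β (hβ : β < α), OrdOdd β → s β hβ = σ β (fun γ hγ => s γ (hγ.trans hβ)))

/-- `σ` is a winning strategy for INC in the completeness game `G(P, δ)`: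
(i) against any partial play of odd length in which INC has followed `σ`, the move
produced by `σ` is a legal move (a lower bound of the previous moves), and
(ii) there is no full descending play of length `δ` in which INC follows `σ`
(i.e. COM eventually gets stuck before stage `δ`). -/
def IncWinning {P : Type u} [Preorder P] [OrderTop P] (σ : IncStrategy.{u, v} P)
    (δ : Ordinal.{v}) : Prop :=
  (∀ α, α < δ → OrdOdd α → ∀ s : (β : Ordinal.{v}) → β < α → P,
      IncFollows σ α s → ∀ β (hβ : β < α), σ α s ≤ s β hβ) ∧
  ¬ ∃ f : Ordinal.{v} → P, f 0 = ⊤ ∧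
      (∀ β γ, β ≤ γ → γ < δ → f γ ≤ f β) ∧
      ∀ α, α < δ → OrdOdd α → f α = σ α (fun β _ => f β)

/-- `τ` is a winning strategy for COM in the completeness game `G(P, δ)`: it plays
`1 = ⊤` at stage `0`, and against any descending partial play of even or limit length
`< δ` in which COM has followed `τ` at all even and limit stages, the move produced by
`τ` is a legal move (a lower bound of the previous moves). -/
def ComWinning {P : Type u} [Preorder P] [OrderTop P] (τ : ComStrategy.{u, v} P)
    (δ : Ordinal.{v}) : Prop :=
  (∀ s : (β : Ordinal.{v}) → β < (0 : Ordinal.{v}) → P, τ 0 s = ⊤) ∧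
  ∀ α, α < δ → OrdEven α → ∀ s : (β : Ordinal.{v}) → β < α → P,
    (∀ β γ (hβγ : β ≤ γ) (hγ : γ < α), s γ hγ ≤ s β (lt_of_le_of_lt hβγ hγ)) →
    (∀ β (hβ : β < α), OrdEven β → s β hβ = τ β (fun γ hγ => s γ (hγ.trans hβ))) →
    ∀ β (hβ : β < α), τ α s ≤ s β hβ


/-- Adding a natural number to an ordinal below a limit ordinal stays below it. -/
lemma nat_add_lt_limit' {γ δ : Ordinal.{v}} (h : γ < δ) (hδ : Order.IsSuccLimit δ) (m : ℕ) :
    γ + (m : Ordinal.{v}) < δ := by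
  induction m with
  | zero => simpa using h
  | succ k ih =>
      have hc : γ + ((k + 1 : ℕ) : Ordinal.{v}) = Order.succ (γ + (k : Ordinal.{v})) := by
        push_cast
        rw [← add_assoc, Ordinal.add_one_eq_succ]
      rw [hc]
      exact hδ.succ_lt ih

/-- Uniqueness of the decomposition of an ordinal as (limit-or-zero) + natural. -/
lemma decomp_unique' {γ γ' : Ordinal.{v}} {m n : ℕ}
    (hγ : γ = 0 ∨ Order.IsSuccLimit γ) (hγ' : γ' = 0 ∨ Order.IsSuccLimit γ')
    (h : γ + (m : Ordinal.{v}) = γ' + (n : Ordinal.{v})) : γ = γ' ∧ m = n := by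
  have key : ∀ {a b : Ordinal.{v}} {i j : ℕ}, (b = 0 ∨ Order.IsSuccLimit b) → a < b →
      a + (i : Ordinal.{v}) ≠ b + (j : Ordinal.{v}) := by
    intro a b i j hb hab he
    have hb' : Order.IsSuccLimit b := by
      rcases hb with rfl | hb
      · exact absurd hab (not_lt.2 (zero_le (a := a)))
      · exact hb
    have h1 : a + (i : Ordinal.{v}) < b := nat_add_lt_limit' hab hb' i
    have h2 : b ≤ b + (j : Ordinal.{v}) := le_self_add
    rw [he] at h1
    exact absurd h1 (not_lt.2 h2)
  rcases lt_trichotomy γ γ' with hlt | heq | hgt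
  · exact absurd h (key hγ' hlt)
  · subst heq
    refine ⟨rfl, ?_⟩
    have := add_left_cancel h
    exact_mod_cast this
  · exact absurd h.symm (key hγ hgt)

/-- Existence of the decomposition of an ordinal as (limit-or-zero) + natural. -/
lemma exists_decomp' (α : Ordinal.{v}) : ∃ (γ : Ordinal.{v}) (n : ℕ),
    (γ = 0 ∨ Order.IsSuccLimit γ) ∧ α = γ + (n : Ordinal.{v}) := by
  induction α using Ordinal.limitRecOn with
  | zero => exact ⟨0, 0, Or.inl rfl, by simp⟩
  | add_one o ih =>
      obtain ⟨γ, n, h1, h2⟩ := ih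
      refine ⟨γ, n + 1, h1, ?_⟩
      rw [h2]
      push_cast
      rw [add_assoc]
  | limit o ho _ => exact ⟨o, 0, Or.inr ho, by simp⟩

lemma decomp_mono' {γ γ' : Ordinal.{v}} {n n' : ℕ}
    (hγ : γ = 0 ∨ Order.IsSuccLimit γ) (hγ' : γ' = 0 ∨ Order.IsSuccLimit γ')
    (h : γ + (n : Ordinal.{v}) ≤ γ' + (n' : Ordinal.{v})) :
    γ + ((2 * n + 1 : ℕ) : Ordinal.{v}) ≤ γ' + ((2 * n' + 1 : ℕ) : Ordinal.{v}) := by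
  rcases lt_trichotomy γ γ' with hlt | heq | hgt
  · have hγ'' : Order.IsSuccLimit γ' := by
      rcases hγ' with rfl | hl
      · exact absurd hlt (not_lt.2 (zero_le (a := γ)))
      · exact hl
    exact le_trans (nat_add_lt_limit' hlt hγ'' _).le le_self_add
  · subst heq
    have hn : n ≤ n' := by
      have := (add_le_add_iff_left γ).1 h
      exact_mod_cast this
    exact (add_le_add_iff_left γ).2 (by exact_mod_cast (by omega : 2 * n + 1 ≤ 2 * n' + 1))
  · exfalso
    have hγl : Order.IsSuccLimit γ := by
      rcases hγ with rfl | hl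
      · exact absurd hgt (not_lt.2 (zero_le (a := γ')))
      · exact hl
    have h1 : γ' + (n' : Ordinal.{v}) < γ := nat_add_lt_limit' hgt hγl n'
    exact absurd h (not_le.2 (lt_of_lt_of_le h1 le_self_add))

lemma stronglyDistrib_of_lt_aleph0 {P : Type u} [PartialOrder P] [OrderTop P]
    (κ : Cardinal.{v}) (hκ : κ < Cardinal.aleph0) : StronglyDistrib κ P := by
  obtain ⟨N, rfl⟩ := Cardinal.lt_aleph0.mp hκ
  intro D hD p
  classical
  have hord : (Cardinal.ord (N : Cardinal.{v})) = ((N : ℕ) : Ordinal.{v}) := Cardinal.ord_nat N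
  have step : ∀ (k : ℕ) (r : P), ∃ x : P, x ≤ r ∧
      (((k : ℕ) : Ordinal.{v}) < ((N : ℕ) : Ordinal.{v}) → x ∈ D k) := by
    intro k r
    by_cases hk : ((k : ℕ) : Ordinal.{v}) < ((N : ℕ) : Ordinal.{v})
    · obtain ⟨x, hx1, hx2⟩ := (hD k (by rw [hord]; exact hk)).2 r
      exact ⟨x, hx1, fun _ => hx2⟩
    · exact ⟨r, le_rfl, fun hk' => absurd hk' hk⟩
  let q : ℕ → P := fun k => Nat.rec (Classical.choose (step 0 p))
    (fun k ih => Classical.choose (step (k + 1) ih)) k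
  have hq0 : q 0 ≤ p ∧ (((0 : ℕ) : Ordinal.{v}) < ((N : ℕ) : Ordinal.{v}) → q 0 ∈ D 0) :=
    Classical.choose_spec (step 0 p)
  have hqs : ∀ k : ℕ, q (k + 1) ≤ q k ∧
      ((((k + 1 : ℕ)) : Ordinal.{v}) < ((N : ℕ) : Ordinal.{v}) → q (k + 1) ∈ D (k + 1)) :=
    fun k => Classical.choose_spec (step (k + 1) (q k))
  have qanti : ∀ j k : ℕ, j ≤ k → q k ≤ q j := by
    intro j k hjk
    induction hjk with
    | refl => exact le_rfl
    | step _ ih => exact le_trans (hqs _).1 ih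
  have qmem : ∀ k : ℕ, ((k : ℕ) : Ordinal.{v}) < ((N : ℕ) : Ordinal.{v}) → q k ∈ D k := by
    intro k hk
    cases k with
    | zero => exact hq0.2 hk
    | succ k =>
        have := (hqs k).2 (by exact_mod_cast hk)
        exact_mod_cast this
  refine ⟨fun α => if h : ∃ m : ℕ, α = ((m : ℕ) : Ordinal.{v}) then q h.choose else p,
    ?_, ?_, ?_⟩
  · have h0 : ∃ m : ℕ, (0 : Ordinal.{v}) = ((m : ℕ) : Ordinal.{v}) := ⟨0, by simp⟩
    beta_reduce
    rw [dif_pos h0]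
    have : h0.choose = 0 := by
      have := h0.choose_spec
      exact_mod_cast this.symm
    rw [this]
    exact hq0.1
  · intro β α hβα hα
    rw [hord] at hα
    have hβ : β < ((N : ℕ) : Ordinal.{v}) := lt_of_le_of_lt hβα hα
    have hαω : α < Ordinal.omega0 := lt_of_lt_of_le hα (Ordinal.nat_lt_omega0 N).le
    have hβω : β < Ordinal.omega0 := lt_of_lt_of_le hβ (Ordinal.nat_lt_omega0 N).le
    obtain ⟨a, rfl⟩ := Ordinal.lt_omega0.mp hαω
    obtain ⟨b, rfl⟩ := Ordinal.lt_omega0.mp hβω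
    have ha : ∃ m : ℕ, ((a : ℕ) : Ordinal.{v}) = ((m : ℕ) : Ordinal.{v}) := ⟨a, rfl⟩
    have hb : ∃ m : ℕ, ((b : ℕ) : Ordinal.{v}) = ((m : ℕ) : Ordinal.{v}) := ⟨b, rfl⟩
    beta_reduce
    rw [dif_pos ha, dif_pos hb]
    have ha' : ha.choose = a := by have := ha.choose_spec; exact_mod_cast this.symm
    have hb' : hb.choose = b := by have := hb.choose_spec; exact_mod_cast this.symm
    rw [ha', hb']
    exact qanti b a (by exact_mod_cast hβα)
  · intro α hα
    rw [hord] at hα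
    have hαω : α < Ordinal.omega0 := lt_of_lt_of_le hα (Ordinal.nat_lt_omega0 N).le
    obtain ⟨a, rfl⟩ := Ordinal.lt_omega0.mp hαω
    have ha : ∃ m : ℕ, ((a : ℕ) : Ordinal.{v}) = ((m : ℕ) : Ordinal.{v}) := ⟨a, rfl⟩
    beta_reduce
    rw [dif_pos ha]
    have ha' : ha.choose = a := by have := ha.choose_spec; exact_mod_cast this.symm
    rw [ha']
    exact qmem a hα

/-- If `P` (a partial order with greatest element) is not strongly `<κ`-distributive,
then INC has a winning strategy in the completeness game `G(P, κ)`. -/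
theorem incWinning_of_not_stronglyDistrib {P : Type u} [PartialOrder P] [OrderTop P]
    (κ : Cardinal.{v}) (h : ¬ StronglyDistrib κ P) :
    ∃ σ : IncStrategy.{u, v} P, IncWinning σ κ.ord := by
  by_cases hκ : Cardinal.aleph0 ≤ κ
  case neg =>
    exact absurd (stronglyDistrib_of_lt_aleph0 κ (not_le.mp hκ)) h
  have hδ : Order.IsSuccLimit κ.ord := Cardinal.isSuccLimit_ord hκ
  have h' : ∃ D : Ordinal.{v} → Set P, (∀ α < κ.ord, OpenDense (D α)) ∧ ∃ p : P,
      ¬ ∃ f : Ordinal.{v} → P, f 0 ≤ p ∧ (∀ β α, β ≤ α → α < κ.ord → f α ≤ f β) ∧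
        ∀ α < κ.ord, f α ∈ D α := by
    by_contra hc
    apply h
    intro D hD p
    by_contra hf
    exact hc ⟨D, hD, p, hf⟩
  obtain ⟨D, hD, p, hp⟩ := h'
  -- The specification of INC's strategy.
  have spec : ∀ (α : Ordinal.{v}) (s : (β : Ordinal.{v}) → β < α → P), ∃ q : P,
      α < κ.ord → ∀ (γ : Ordinal.{v}) (n : ℕ), (γ = 0 ∨ Order.IsSuccLimit γ) →
        α = γ + ((2 * n + 1 : ℕ) : Ordinal.{v}) →
        q ∈ D (γ + (n : Ordinal.{v})) ∧ (α = 1 → q ≤ p) ∧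
        ∀ (hh : γ + ((2 * n : ℕ) : Ordinal.{v}) < α), α ≠ 1 →
          q ≤ s (γ + ((2 * n : ℕ) : Ordinal.{v})) hh := by
    intro α s
    by_cases hα : α < κ.ord ∧ OrdOdd α
    · obtain ⟨hακ, γ0, n0, hγ0, hαe⟩ := And.intro hα.1 hα.2
      have hpred : γ0 + ((2 * n0 : ℕ) : Ordinal.{v}) < α := by
        rw [hαe]
        exact (add_lt_add_iff_left γ0).2 (by exact_mod_cast Nat.lt_succ_self (2 * n0))
      have hDn : OpenDense (D (γ0 + (n0 : Ordinal.{v}))) := by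
        refine hD _ (lt_of_le_of_lt ?_ hακ)
        rw [hαe]
        exact (add_le_add_iff_left γ0).2 (by exact_mod_cast (by omega : n0 ≤ 2 * n0 + 1))
      classical
      set r := if α = 1 then p else s (γ0 + ((2 * n0 : ℕ) : Ordinal.{v})) hpred with hr
      obtain ⟨x, hx1, hx2⟩ := hDn.2 r
      refine ⟨x, fun _ γ n hγ hαe' => ?_⟩
      obtain ⟨h1, h2⟩ := decomp_unique' hγ0 hγ (hαe ▸ hαe')
      have h3 : n0 = n := by omega
      subst h1 h3
      refine ⟨hx2, fun he1 => ?_, fun hh hne => ?_⟩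
      · rw [hr, if_pos he1] at hx1
        exact hx1
      · rw [hr, if_neg hne] at hx1
        exact hx1
    · refine ⟨⊤, fun hακ γ n hγ hαe => absurd ⟨hακ, γ, n, hγ, hαe⟩ hα⟩
  set σ : IncStrategy.{u, v} P := fun α s => (spec α s).choose with hσdef
  have hσ : ∀ (α : Ordinal.{v}) (s : (β : Ordinal.{v}) → β < α → P),
      α < κ.ord → ∀ (γ : Ordinal.{v}) (n : ℕ), (γ = 0 ∨ Order.IsSuccLimit γ) →
        α = γ + ((2 * n + 1 : ℕ) : Ordinal.{v}) →
        σ α s ∈ D (γ + (n : Ordinal.{v})) ∧ (α = 1 → σ α s ≤ p) ∧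
        ∀ (hh : γ + ((2 * n : ℕ) : Ordinal.{v}) < α), α ≠ 1 →
          σ α s ≤ s (γ + ((2 * n : ℕ) : Ordinal.{v})) hh :=
    fun α s => (spec α s).choose_spec
  refine ⟨σ, ?_, ?_⟩
  · -- legality
    intro α hα hodd s hs β hβ
    obtain ⟨γ, n, hγ, hαe⟩ := hodd
    have hsucc : α = Order.succ (γ + ((2 * n : ℕ) : Ordinal.{v})) := by
      rw [hαe, ← Ordinal.add_one_eq_succ, add_assoc]
      push_cast
      ring_nf
    have hpred : γ + ((2 * n : ℕ) : Ordinal.{v}) < α := by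
      rw [hsucc]; exact Order.lt_succ _
    obtain ⟨hmem, hp1, hlast⟩ := hσ α s hα γ n hγ hαe
    by_cases h1 : α = 1
    · have hβ0 : β = 0 := by
        rw [h1] at hβ
        exact Ordinal.lt_one_iff_zero.mp hβ
      subst hβ0
      rw [hs.1 hβ]
      exact le_top
    · refine le_trans (hlast hpred h1) ?_
      have hβle : β ≤ γ + ((2 * n : ℕ) : Ordinal.{v}) := by
        rw [hsucc] at hβ
        exact Order.lt_succ_iff.mp hβ
      exact hs.2.1 β _ hβle hpred
  · -- no full play
    rintro ⟨f, hf0, hfdesc, hfodd⟩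
    choose Γ Nn hlim hdec using exists_decomp'
    set e : Ordinal.{v} → Ordinal.{v} :=
      fun β => Γ β + ((2 * Nn β + 1 : ℕ) : Ordinal.{v}) with he
    have e_odd : ∀ β, OrdOdd (e β) := fun β => ⟨Γ β, Nn β, hlim β, rfl⟩
    have e_lt : ∀ β, β < κ.ord → e β < κ.ord := by
      intro β hβ
      have hΓ : Γ β ≤ β := by
        conv_rhs => rw [hdec β]
        exact le_self_add
      exact nat_add_lt_limit' (lt_of_le_of_lt hΓ hβ) hδ _
    have e_mono : ∀ β β', β ≤ β' → e β ≤ e β' := by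
      intro β β' hββ'
      exact decomp_mono' (hlim β) (hlim β') (by rw [← hdec β, ← hdec β']; exact hββ')
    refine hp ⟨fun β => f (e β), ?_, ?_, ?_⟩
    · -- g 0 ≤ p
      have h00 : (0 : Ordinal.{v}) = Γ 0 ∧ 0 = Nn 0 := by
        have heq : (0 : Ordinal.{v}) + ((0 : ℕ) : Ordinal.{v}) = Γ 0 + ((Nn 0 : ℕ) : Ordinal.{v}) := by
          rw [← hdec 0]; simp
        exact decomp_unique' (Or.inl rfl) (hlim 0) heq
      have he0 : e 0 = 1 := by rw [he]; simp [← h00.1, ← h00.2]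
      have h1κ : (1 : Ordinal.{v}) < κ.ord := Ordinal.one_lt_of_isSuccLimit hδ
      have hodd1 : OrdOdd (1 : Ordinal.{v}) := ⟨0, 0, Or.inl rfl, by simp⟩
      have hfe : f 1 = σ 1 (fun β _ => f β) := hfodd 1 h1κ hodd1
      have hle := (hσ 1 (fun β _ => f β) h1κ 0 0 (Or.inl rfl) (by simp)).2.1 rfl
      show f (e 0) ≤ p
      rw [he0, hfe]
      exact hle
    · -- descending
      intro β β' hββ' hβ'
      exact hfdesc (e β) (e β') (e_mono β β' hββ') (e_lt β' hβ')
    · -- membership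
      intro β hβ
      have hfe : f (e β) = σ (e β) (fun γ _ => f γ) := hfodd (e β) (e_lt β hβ) (e_odd β)
      show f (e β) ∈ D β
      rw [hfe]
      have hmem := (hσ (e β) (fun γ _ => f γ) (e_lt β hβ) (Γ β) (Nn β) (hlim β) rfl).1
      rwa [← hdec β] at hmem
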